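/- arXiv:1909.03238 — 2 statements merged into one kernel-verified Lean document; each statement's English description precedes it below -/
import Mathlib

section
/- Let K₁, K₂ ⊆ ℝ² be closed cones with K₁ ∩ K₂ = {0}, and let δ > 0 and α > 2(1 + 2/δ). Then sup_{θ∈ℝ²} Σ_{t ∈ K₁ ∩ (ℤ²+θ)} ( ∫_{K₂} (1+|t−s|)^{−α} ds )^{δ/2} < ∞, where the sum runs over all points of the shifted integer lattice ℤ²+θ = {(k₁+θ₁, k₂+θ₂) : k₁,k₂ ∈ ℤ} lying in K₁, and the inner integral is with respect to Lebesgue measure on ℝ². -/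
open MeasureTheory
open scoped ENNReal

/-- A closed cone in `ℝ²`: a closed set stable under multiplication by nonnegative scalars. -/
def IsClosedCone (K : Set (EuclideanSpace ℝ (Fin 2))) : Prop :=
  IsClosed K ∧ ∀ x ∈ K, ∀ l : ℝ, 0 ≤ l → l • x ∈ K

/-- Separation of two closed cones meeting only at the origin. -/
theorem stmt11_sep_lemma (K₁ K₂ : Set (EuclideanSpace ℝ (Fin 2)))
    (h₁ : IsClosedCone K₁) (h₂ : IsClosedCone K₂) (hK : K₁ ∩ K₂ = {0}) :
    ∃ c : ℝ, 0 < c ∧ c ≤ 1 ∧ ∀ t ∈ K₁, ∀ s ∈ K₂, c * (‖t‖ + ‖s‖) ≤ ‖t - s‖ := by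
  set S : Set (EuclideanSpace ℝ (Fin 2) × EuclideanSpace ℝ (Fin 2)) :=
    {p | p.1 ∈ K₁ ∧ p.2 ∈ K₂ ∧ ‖p.1‖ + ‖p.2‖ = 1} with hS
  have hSclosed : IsClosed S := by
    have : S = (Prod.fst ⁻¹' K₁) ∩ (Prod.snd ⁻¹' K₂) ∩
        ((fun p : EuclideanSpace ℝ (Fin 2) × EuclideanSpace ℝ (Fin 2) =>
          ‖p.1‖ + ‖p.2‖) ⁻¹' {1}) := by
      ext p; simp [hS, Set.mem_setOf_eq, and_assoc]
    rw [this]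
    exact ((h₁.1.preimage continuous_fst).inter (h₂.1.preimage continuous_snd)).inter
      (IsClosed.preimage ((continuous_fst.norm).add (continuous_snd.norm)) isClosed_singleton)
  have hSbdd : Bornology.IsBounded S := by
    apply Bornology.IsBounded.subset (Metric.isBounded_closedBall
      (x := (0 : EuclideanSpace ℝ (Fin 2) × EuclideanSpace ℝ (Fin 2))) (r := 1))
    intro p hp
    have h1 : ‖p.1‖ ≤ 1 := by have := norm_nonneg p.2; linarith [hp.2.2]
    have h2 : ‖p.2‖ ≤ 1 := by have := norm_nonneg p.1; linarith [hp.2.2]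
    simp only [Metric.mem_closedBall, dist_zero_right]
    simpa [Prod.norm_def] using max_le h1 h2
  have hScompact : IsCompact S := Metric.isCompact_of_isClosed_isBounded hSclosed hSbdd
  have hpos : ∀ p ∈ S, 0 < ‖p.1 - p.2‖ := by
    intro p hp
    rw [norm_pos_iff, sub_ne_zero]
    intro heq
    have hmem : p.1 ∈ K₁ ∩ K₂ := ⟨hp.1, heq ▸ hp.2.1⟩
    rw [hK] at hmem
    have h0 : p.1 = 0 := hmem
    have h0' : p.2 = 0 := heq ▸ h0
    have := hp.2.2
    rw [h0, h0'] at this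
    simp at this
  have key : ∃ c : ℝ, 0 < c ∧ ∀ p ∈ S, c ≤ ‖p.1 - p.2‖ := by
    rcases S.eq_empty_or_nonempty with hemp | hne
    · exact ⟨1, one_pos, by simp [hemp]⟩
    · obtain ⟨m, hmS, hmin⟩ := hScompact.exists_isMinOn hne
        ((continuous_fst.sub continuous_snd).norm.continuousOn)
      exact ⟨‖m.1 - m.2‖, hpos m hmS, fun p hp => hmin hp⟩
  obtain ⟨c₀, hc₀, hc₀min⟩ := key
  refine ⟨min c₀ 1, lt_min hc₀ one_pos, min_le_right _ _, ?_⟩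
  intro t ht s hs
  rcases eq_or_lt_of_le (add_nonneg (norm_nonneg t) (norm_nonneg s)) with hr0 | hr
  · have ht0 : ‖t‖ = 0 := by have := norm_nonneg t; have := norm_nonneg s; linarith
    have hs0 : ‖s‖ = 0 := by have := norm_nonneg t; have := norm_nonneg s; linarith
    rw [ht0, hs0]
    simp
  · set r : ℝ := ‖t‖ + ‖s‖ with hrdef
    have hrpos : 0 < r := hr
    have hmemS : (r⁻¹ • t, r⁻¹ • s) ∈ S := by
      refine ⟨h₁.2 t ht r⁻¹ (by positivity), h₂.2 s hs r⁻¹ (by positivity), ?_⟩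
      simp only [norm_smul, Real.norm_eq_abs, abs_of_pos (inv_pos.mpr hrpos)]
      field_simp
      exact hrdef.symm
    have hmin := hc₀min _ hmemS
    simp only at hmin
    rw [← smul_sub, norm_smul, Real.norm_eq_abs, abs_of_pos (inv_pos.mpr hrpos),
      inv_mul_eq_div, le_div_iff₀ hrpos] at hmin
    calc min c₀ 1 * r ≤ c₀ * r := by
          apply mul_le_mul_of_nonneg_right (min_le_left _ _) hrpos.le
      _ ≤ ‖t - s‖ := hmin

/-- A uniform (in the offset) bound for a one-dimensional lattice sum. -/
theorem stmt11_one_dim_sum (c q : ℝ) (hc : 0 < c) (hc1 : c ≤ 1) (hq : 1 < q) :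
    ∃ J : ℝ≥0∞, J < ⊤ ∧ ∀ θ : ℝ,
      (∑' k : ℤ, ENNReal.ofReal ((1 + c * |(k : ℝ) + θ|) ^ (-q))) ≤ J := by
  have hsum : Summable (fun k : ℤ => (1 + c * |(k : ℝ)|) ^ (-q)) := by
    have hnat : Summable (fun n : ℕ => (1 + c * (n : ℝ)) ^ (-q)) := by
      have h1 : Summable (fun n : ℕ => ((n : ℝ)) ^ (-q)) :=
        (Real.summable_nat_rpow).mpr (by linarith)
      have h2 : Summable (fun n : ℕ => (((n + 1 : ℕ) : ℝ)) ^ (-q)) :=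
        (summable_nat_add_iff 1).mpr h1
      have h3 : Summable (fun n : ℕ => c ^ (-q) * (((n + 1 : ℕ) : ℝ)) ^ (-q)) := h2.mul_left _
      refine Summable.of_nonneg_of_le (fun n => by positivity) (fun n => ?_) h3
      have hb : c * (((n + 1 : ℕ)) : ℝ) ≤ 1 + c * n := by
        push_cast; nlinarith [Nat.cast_nonneg (α := ℝ) n]
      have hbp : (0:ℝ) < c * (((n + 1 : ℕ)) : ℝ) := by positivity
      calc (1 + c * (n : ℝ)) ^ (-q) ≤ (c * (((n + 1 : ℕ)) : ℝ)) ^ (-q) :=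
            Real.rpow_le_rpow_of_nonpos hbp hb (by linarith)
        _ = c ^ (-q) * (((n + 1 : ℕ) : ℝ)) ^ (-q) :=
            Real.mul_rpow hc.le (by positivity)
    apply Summable.of_nat_of_neg
    · simpa using hnat
    · simpa using hnat
  set J₀ : ℝ≥0∞ := ∑' k : ℤ, ENNReal.ofReal ((1 + c * |(k : ℝ)|) ^ (-q)) with hJ₀
  have hJ₀top : J₀ < ⊤ := by
    rw [hJ₀, ← ENNReal.ofReal_tsum_of_nonneg (fun k => by positivity) hsum]
    exact ENNReal.ofReal_lt_top
  refine ⟨ENNReal.ofReal (2 ^ q) * J₀, ENNReal.mul_lt_top ENNReal.ofReal_lt_top hJ₀top, ?_⟩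
  intro θ
  have hshift : (∑' k : ℤ, ENNReal.ofReal ((1 + c * |(k : ℝ) + θ|) ^ (-q)))
      = ∑' k : ℤ, ENNReal.ofReal ((1 + c * |(k : ℝ) + Int.fract θ|) ^ (-q)) := by
    rw [← Equiv.tsum_eq (Equiv.subRight (⌊θ⌋ : ℤ))
      (fun k : ℤ => ENNReal.ofReal ((1 + c * |(k : ℝ) + θ|) ^ (-q)))]
    congr 1; funext k
    congr 3
    simp only [Equiv.subRight_apply]
    push_cast [Int.fract]
    ring_nf
  rw [hshift]
  set η := Int.fract θ with hη
  have hη0 : 0 ≤ η := Int.fract_nonneg θ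
  have hη1 : η < 1 := Int.fract_lt_one θ
  calc (∑' k : ℤ, ENNReal.ofReal ((1 + c * |(k : ℝ) + η|) ^ (-q)))
      ≤ ∑' k : ℤ, ENNReal.ofReal (2 ^ q * (1 + c * |(k : ℝ)|) ^ (-q)) := by
        apply ENNReal.tsum_le_tsum
        intro k
        apply ENNReal.ofReal_le_ofReal
        have habs : |(k : ℝ)| ≤ |(k : ℝ) + η| + 1 := by
          have h' : |(k:ℝ)| ≤ |(k:ℝ) + η| + |η| := by
            calc |(k:ℝ)| = |((k:ℝ) + η) - η| := by ring_nf
              _ ≤ |(k:ℝ) + η| + |η| := abs_sub _ _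
          have hηabs : |η| ≤ 1 := by rw [abs_of_nonneg hη0]; linarith
          linarith
        have hhalf : (1 + c * |(k : ℝ)|) / 2 ≤ 1 + c * |(k : ℝ) + η| := by
          have h1 : c * |(k:ℝ)| ≤ c * |(k:ℝ) + η| + c :=
            by nlinarith [mul_le_mul_of_nonneg_left habs hc.le]
          nlinarith [abs_nonneg ((k:ℝ) + η)]
        have hbp : (0:ℝ) < (1 + c * |(k : ℝ)|) / 2 := by positivity
        calc (1 + c * |(k : ℝ) + η|) ^ (-q)
            ≤ ((1 + c * |(k : ℝ)|) / 2) ^ (-q) :=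
              Real.rpow_le_rpow_of_nonpos hbp hhalf (by linarith)
          _ = 2 ^ q * (1 + c * |(k : ℝ)|) ^ (-q) := by
              rw [Real.div_rpow (by positivity) (by norm_num),
                Real.rpow_neg (by norm_num : (0:ℝ) ≤ 2)]
              field_simp
    _ = ENNReal.ofReal (2 ^ q) * J₀ := by
        rw [hJ₀, ← ENNReal.tsum_mul_left]
        congr 1; funext k
        rw [← ENNReal.ofReal_mul (by positivity)]

/-- Bound for the inner integral over the second cone. -/
theorem stmt11_inner_bound (K₂ : Set (EuclideanSpace ℝ (Fin 2))) (c γ β α : ℝ)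
    (hc : 0 < c) (hc1 : c ≤ 1) (hγ : 0 ≤ γ) (hβ : 0 < β) (hαsum : α = γ + β)
    (t : EuclideanSpace ℝ (Fin 2))
    (hsep : ∀ s ∈ K₂, c * (‖t‖ + ‖s‖) ≤ ‖t - s‖) :
    (∫⁻ s in K₂, ENNReal.ofReal ((1 + ‖t - s‖) ^ (-α)))
      ≤ ENNReal.ofReal ((1 + c * ‖t‖) ^ (-γ)) * (ENNReal.ofReal (c ^ (-β)) *
          ∫⁻ s : EuclideanSpace ℝ (Fin 2), ENNReal.ofReal ((1 + ‖s‖) ^ (-β))) := by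
  have hmeas : Measurable fun s : EuclideanSpace ℝ (Fin 2) =>
      ENNReal.ofReal ((1 + ‖s‖) ^ (-β)) := by
    apply ENNReal.measurable_ofReal.comp
    fun_prop
  have hg : Measurable fun s : EuclideanSpace ℝ (Fin 2) =>
      ENNReal.ofReal ((1 + c * ‖t‖) ^ (-γ)) * (ENNReal.ofReal (c ^ (-β)) *
        ENNReal.ofReal ((1 + ‖s‖) ^ (-β))) :=
    (measurable_const.mul (measurable_const.mul hmeas))
  calc (∫⁻ s in K₂, ENNReal.ofReal ((1 + ‖t - s‖) ^ (-α)))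
      ≤ ∫⁻ s in K₂, ENNReal.ofReal ((1 + c * ‖t‖) ^ (-γ)) * (ENNReal.ofReal (c ^ (-β)) *
          ENNReal.ofReal ((1 + ‖s‖) ^ (-β))) := by
        apply setLIntegral_mono hg
        intro s hs
        rw [← ENNReal.ofReal_mul (by positivity), ← ENNReal.ofReal_mul (by positivity)]
        apply ENNReal.ofReal_le_ofReal
        set x : ℝ := 1 + c * ‖t‖ + c * ‖s‖ with hx
        have hxpos : 0 < x := by positivity
        have hax : 1 + c * ‖t‖ ≤ x := by
          have : 0 ≤ c * ‖s‖ := by positivity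
          linarith
        have hbx : 1 + c * ‖s‖ ≤ x := by
          have : 0 ≤ c * ‖t‖ := by positivity
          linarith
        have hxts : x ≤ 1 + ‖t - s‖ := by
          have := hsep s hs; rw [hx]; linarith
        calc (1 + ‖t - s‖) ^ (-α) ≤ x ^ (-α) :=
              Real.rpow_le_rpow_of_nonpos hxpos hxts (by rw [hαsum]; linarith)
          _ = x ^ (-γ) * x ^ (-β) := by
              rw [← Real.rpow_add hxpos]; congr 1; rw [hαsum]; ring
          _ ≤ (1 + c * ‖t‖) ^ (-γ) * (c ^ (-β) * (1 + ‖s‖) ^ (-β)) := by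
              have h1 : x ^ (-γ) ≤ (1 + c * ‖t‖) ^ (-γ) :=
                Real.rpow_le_rpow_of_nonpos (by positivity) hax (by linarith)
              have h2 : x ^ (-β) ≤ c ^ (-β) * (1 + ‖s‖) ^ (-β) := by
                have hcb : c * (1 + ‖s‖) ≤ x := by
                  have : c * (1 + ‖s‖) ≤ 1 + c * ‖s‖ := by nlinarith
                  linarith
                calc x ^ (-β) ≤ (c * (1 + ‖s‖)) ^ (-β) :=
                      Real.rpow_le_rpow_of_nonpos (by positivity) hcb (by linarith)
                  _ = c ^ (-β) * (1 + ‖s‖) ^ (-β) := Real.mul_rpow hc.le (by positivity)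
              apply mul_le_mul h1 h2 (by positivity) (by positivity)
    _ ≤ ∫⁻ s : EuclideanSpace ℝ (Fin 2), ENNReal.ofReal ((1 + c * ‖t‖) ^ (-γ)) *
          (ENNReal.ofReal (c ^ (-β)) * ENNReal.ofReal ((1 + ‖s‖) ^ (-β))) :=
        setLIntegral_le_lintegral _ _
    _ = ENNReal.ofReal ((1 + c * ‖t‖) ^ (-γ)) * (ENNReal.ofReal (c ^ (-β)) *
          ∫⁻ s : EuclideanSpace ℝ (Fin 2), ENNReal.ofReal ((1 + ‖s‖) ^ (-β))) := by
        rw [lintegral_const_mul _ (hmeas.const_mul _),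
          lintegral_const_mul _ hmeas]

theorem stmt11_coord_norm (a b : ℝ) :
    (|a| + |b|) / 2 ≤ ‖(WithLp.equiv 2 (Fin 2 → ℝ)).symm ![a, b]‖ := by
  rw [EuclideanSpace.norm_eq]
  simp only [WithLp.equiv_symm_apply, WithLp.ofLp_toLp, Fin.sum_univ_two, Matrix.cons_val_zero,
    Matrix.cons_val_one, Matrix.head_cons, Real.norm_eq_abs, sq_abs]
  have h := Real.sq_sqrt (by positivity : (0:ℝ) ≤ a ^ 2 + b ^ 2)
  have h2 := Real.sqrt_nonneg (a ^ 2 + b ^ 2)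
  nlinarith [abs_nonneg a, abs_nonneg b, sq_abs a, sq_abs b, sq_nonneg (|a| - |b|), sq_nonneg (|a| + |b|)]

set_option maxHeartbeats 2000000 in
/-- Let `K₁, K₂ ⊆ ℝ²` be closed cones with `K₁ ∩ K₂ = {0}`, let `δ > 0`
and `α > 2(1 + 2/δ)`.  Then
`sup_{θ∈ℝ²} Σ_{t ∈ K₁ ∩ (ℤ²+θ)} (∫_{K₂} (1+|t−s|)^{−α} ds)^{δ/2} < ∞`,
the sum running over the points of the shifted integer lattice `ℤ²+θ` lying in `K₁`. -/
theorem stmt11 (K₁ K₂ : Set (EuclideanSpace ℝ (Fin 2)))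
    (h₁ : IsClosedCone K₁) (h₂ : IsClosedCone K₂) (hK : K₁ ∩ K₂ = {0})
    (δ : ℝ) (hδ : 0 < δ) (α : ℝ) (hα : 2 * (1 + 2 / δ) < α) :
    (⨆ θ : ℝ × ℝ, ∑' k : ℤ × ℤ,
        Set.indicator K₁
          (fun t => (∫⁻ s in K₂, ENNReal.ofReal ((1 + ‖t - s‖) ^ (-α))) ^ (δ / 2))
          ((WithLp.equiv 2 (Fin 2 → ℝ)).symm ![(k.1 : ℝ) + θ.1, (k.2 : ℝ) + θ.2]))
      < ⊤ := by
  obtain ⟨c, hc, hc1, hsep⟩ := stmt11_sep_lemma K₁ K₂ h₁ h₂ hK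
  have hδ' : (0:ℝ) < δ / 2 := by linarith
  have h4δ : 4 / δ * δ = 4 := div_mul_cancel₀ _ (ne_of_gt hδ)
  have hαbig : 2 + 4 / δ < α := by
    have : 2 * (1 + 2 / δ) = 2 + 4 / δ := by ring
    linarith [hα, this.symm.le]
  set β : ℝ := (α + 2 - 4 / δ) / 2 with hβdef
  set γ : ℝ := (α - 2 + 4 / δ) / 2 with hγdef
  have hβ2 : 2 < β := by rw [hβdef]; rw [lt_div_iff₀ (by norm_num : (0:ℝ) < 2)]; linarith
  have hβpos : 0 < β := by linarith
  have hγpos : 0 < γ := by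
    have h40 : 0 < 4 / δ := by positivity
    rw [hγdef]
    linarith
  have hαsum : α = γ + β := by rw [hγdef, hβdef]; ring
  set p : ℝ := γ * (δ / 2) with hpdef
  have hp2 : 2 < p := by
    rw [hpdef, hγdef]
    have hδne : δ ≠ 0 := ne_of_gt hδ
    rw [show (α - 2 + 4 / δ) / 2 * (δ / 2) = ((α - 2) * δ + 4 / δ * δ) / 4 by ring, h4δ]
    rw [lt_div_iff₀ (by norm_num : (0:ℝ) < 4)]
    nlinarith [mul_lt_mul_of_pos_right hαbig hδ, h4δ]
  set q : ℝ := p / 2 with hqdef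
  have hq : 1 < q := by rw [hqdef]; linarith
  set c₂ : ℝ := c / 2 with hc₂def
  have hc₂ : 0 < c₂ := by positivity
  have hc₂1 : c₂ ≤ 1 := by rw [hc₂def]; linarith
  -- the finite constant coming from the inner integral
  set I : ℝ≥0∞ := ENNReal.ofReal (c ^ (-β)) *
      ∫⁻ s : EuclideanSpace ℝ (Fin 2), ENNReal.ofReal ((1 + ‖s‖) ^ (-β)) with hIdef
  have hIlt : I < ⊤ := by
    apply ENNReal.mul_lt_top ENNReal.ofReal_lt_top
    apply finite_integral_one_add_norm
    have : Module.finrank ℝ (EuclideanSpace ℝ (Fin 2)) = 2 := by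
      simp [finrank_euclideanSpace]
    rw [this]; push_cast; linarith
  set C : ℝ≥0∞ := I ^ (δ / 2) with hCdef
  have hClt : C < ⊤ := ENNReal.rpow_lt_top_of_nonneg (by linarith) hIlt.ne
  obtain ⟨J, hJlt, hJ⟩ := stmt11_one_dim_sum c₂ q hc₂ hc₂1 hq
  -- uniform bound over all offsets
  have hbound : ∀ θ : ℝ × ℝ, (∑' k : ℤ × ℤ,
      Set.indicator K₁
        (fun t => (∫⁻ s in K₂, ENNReal.ofReal ((1 + ‖t - s‖) ^ (-α))) ^ (δ / 2))
        ((WithLp.equiv 2 (Fin 2 → ℝ)).symm ![(k.1 : ℝ) + θ.1, (k.2 : ℝ) + θ.2]))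
      ≤ C * (J * J) := by
    intro θ
    have hterm : ∀ k : ℤ × ℤ,
        Set.indicator K₁
          (fun t => (∫⁻ s in K₂, ENNReal.ofReal ((1 + ‖t - s‖) ^ (-α))) ^ (δ / 2))
          ((WithLp.equiv 2 (Fin 2 → ℝ)).symm ![(k.1 : ℝ) + θ.1, (k.2 : ℝ) + θ.2])
        ≤ C * (ENNReal.ofReal ((1 + c₂ * |(k.1 : ℝ) + θ.1|) ^ (-q)) *
            ENNReal.ofReal ((1 + c₂ * |(k.2 : ℝ) + θ.2|) ^ (-q))) := by
      intro k
      set x₁ : ℝ := (k.1 : ℝ) + θ.1 with hx₁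
      set x₂ : ℝ := (k.2 : ℝ) + θ.2 with hx₂
      set x : EuclideanSpace ℝ (Fin 2) := (WithLp.equiv 2 (Fin 2 → ℝ)).symm ![x₁, x₂] with hxdef
      by_cases hxmem : x ∈ K₁
      · rw [Set.indicator_of_mem hxmem]
        have hib := stmt11_inner_bound K₂ c γ β α hc hc1 hγpos.le hβpos hαsum x
          (fun s hs => hsep x hxmem s hs)
        have h2 : (∫⁻ s in K₂, ENNReal.ofReal ((1 + ‖x - s‖) ^ (-α))) ^ (δ / 2)
            ≤ (ENNReal.ofReal ((1 + c * ‖x‖) ^ (-γ)) * I) ^ (δ / 2) := by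
          apply ENNReal.rpow_le_rpow _ (by linarith)
          rw [hIdef]
          exact hib
        rw [ENNReal.mul_rpow_of_nonneg _ _ (by linarith : (0:ℝ) ≤ δ / 2)] at h2
        have hwpos : (0:ℝ) < 1 + c * ‖x‖ := by positivity
        have h3 : ENNReal.ofReal ((1 + c * ‖x‖) ^ (-γ)) ^ (δ / 2)
            = ENNReal.ofReal ((1 + c * ‖x‖) ^ (-p)) := by
          rw [ENNReal.ofReal_rpow_of_pos (by positivity), ← Real.rpow_mul hwpos.le]
          congr 1
          rw [hpdef]; ring
        -- the real two-variable bound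
        have hxnorm : (|x₁| + |x₂|) / 2 ≤ ‖x‖ := stmt11_coord_norm x₁ x₂
        have hreal : (1 + c * ‖x‖) ^ (-p)
            ≤ (1 + c₂ * |x₁|) ^ (-q) * (1 + c₂ * |x₂|) ^ (-q) := by
          set u : ℝ := 1 + c₂ * |x₁| with hu
          set v : ℝ := 1 + c₂ * |x₂| with hv
          set w : ℝ := 1 + c * ‖x‖ with hw
          have hupos : 0 < u := by positivity
          have hvpos : 0 < v := by positivity
          have hwpos' : 0 < w := hwpos
          have huv : u * v ≤ w ^ 2 := by
            have hz : 1 + c₂ * |x₁| + c₂ * |x₂| ≤ w := by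
              rw [hw, hc₂def]
              nlinarith [hxnorm, hc.le]
            have hz0 : (0:ℝ) ≤ 1 + c₂ * |x₁| + c₂ * |x₂| := by positivity
            have ha : (0:ℝ) ≤ c₂ * |x₁| := mul_nonneg hc₂.le (abs_nonneg x₁)
            have hb : (0:ℝ) ≤ c₂ * |x₂| := mul_nonneg hc₂.le (abs_nonneg x₂)
            have huz : u * v ≤ (1 + c₂ * |x₁| + c₂ * |x₂|) ^ 2 := by
              rw [hu, hv]; nlinarith [sq_nonneg (c₂ * |x₁|), sq_nonneg (c₂ * |x₂|), mul_nonneg ha hb]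
            exact le_trans huz (pow_le_pow_left₀ hz0 hz 2)
          have hsq : w ^ (-p) = (w ^ 2) ^ (-q) := by
            rw [← Real.rpow_natCast w 2, ← Real.rpow_mul hwpos'.le]
            congr 1
            rw [hqdef]; push_cast; ring
          rw [hsq]
          calc (w ^ 2) ^ (-q) ≤ (u * v) ^ (-q) :=
                Real.rpow_le_rpow_of_nonpos (by positivity) huv (by linarith)
            _ = u ^ (-q) * v ^ (-q) := Real.mul_rpow hupos.le hvpos.le
        calc (∫⁻ s in K₂, ENNReal.ofReal ((1 + ‖x - s‖) ^ (-α))) ^ (δ / 2)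
            ≤ ENNReal.ofReal ((1 + c * ‖x‖) ^ (-γ)) ^ (δ / 2) * I ^ (δ / 2) := h2
          _ = ENNReal.ofReal ((1 + c * ‖x‖) ^ (-p)) * C := by rw [h3, hCdef]
          _ ≤ ENNReal.ofReal ((1 + c₂ * |x₁|) ^ (-q) * (1 + c₂ * |x₂|) ^ (-q)) * C := by
              exact mul_le_mul_left (ENNReal.ofReal_le_ofReal hreal) C
          _ = C * (ENNReal.ofReal ((1 + c₂ * |x₁|) ^ (-q)) *
                ENNReal.ofReal ((1 + c₂ * |x₂|) ^ (-q))) := by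
              rw [ENNReal.ofReal_mul (by positivity), mul_comm]
      · rw [Set.indicator_of_notMem hxmem]
        exact zero_le
    calc (∑' k : ℤ × ℤ,
        Set.indicator K₁
          (fun t => (∫⁻ s in K₂, ENNReal.ofReal ((1 + ‖t - s‖) ^ (-α))) ^ (δ / 2))
          ((WithLp.equiv 2 (Fin 2 → ℝ)).symm ![(k.1 : ℝ) + θ.1, (k.2 : ℝ) + θ.2]))
        ≤ ∑' k : ℤ × ℤ, C * (ENNReal.ofReal ((1 + c₂ * |(k.1 : ℝ) + θ.1|) ^ (-q)) *
            ENNReal.ofReal ((1 + c₂ * |(k.2 : ℝ) + θ.2|) ^ (-q))) :=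
          ENNReal.tsum_le_tsum hterm
      _ = C * ∑' k : ℤ × ℤ, (ENNReal.ofReal ((1 + c₂ * |(k.1 : ℝ) + θ.1|) ^ (-q)) *
            ENNReal.ofReal ((1 + c₂ * |(k.2 : ℝ) + θ.2|) ^ (-q))) := ENNReal.tsum_mul_left
      _ = C * ((∑' a : ℤ, ENNReal.ofReal ((1 + c₂ * |(a : ℝ) + θ.1|) ^ (-q))) *
            (∑' b : ℤ, ENNReal.ofReal ((1 + c₂ * |(b : ℝ) + θ.2|) ^ (-q)))) := by
          congr 1
          rw [ENNReal.tsum_prod']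
          simp only
          rw [← ENNReal.tsum_mul_right]
          congr 1; funext a
          rw [← ENNReal.tsum_mul_left]
      _ ≤ C * (J * J) := by
          apply mul_le_mul_right
          exact mul_le_mul' (hJ θ.1) (hJ θ.2)
  exact lt_of_le_of_lt (iSup_le hbound)
    (ENNReal.mul_lt_top hClt (ENNReal.mul_lt_top hJlt hJlt))
end

section
/- Let α > 4, A ≥ 0, and let φ : ℝ² → ℂ be a measurable function with |φ(t)| ≤ A(1+|t|)^{−α/2} for almost every t ∈ ℝ². Then for every h ∈ ℝ², | ∫_{ℝ²} φ(−h−s) \overline{φ(h−s)} ds | ≤ (8πA²/(α−4)) (1+|h|)^{−α/2}. -/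
open MeasureTheory
open scoped Real

open Metric Filter Set Module
open scoped Topology

lemma aux_integrableOn {q : ℝ} (hq : 2 < q) :
    IntegrableOn (fun r : ℝ => (1 + r) ^ (-(q - 1))) (Ioi 0) := by
  have h1 : (finrank ℝ ℝ : ℝ) < q - 1 := by
    simp only [finrank_self, Nat.cast_one]; linarith
  have h2 := integrable_one_add_norm (μ := (volume : Measure ℝ)) h1
  refine h2.integrableOn.congr_fun (fun x hx => ?_) measurableSet_Ioi
  beta_reduce; rw [Real.norm_eq_abs, abs_of_pos hx]

lemma aux_integral_val {q : ℝ} (hq : 2 < q) :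
    ∫ r in Ioi (0:ℝ), (1 + r) ^ (-(q - 1)) = 1 / (q - 2) := by
  have hderiv : ∀ x ∈ Ioi (0:ℝ),
      HasDerivAt (fun r : ℝ => -(1 + r) ^ (2 - q) / (q - 2)) ((1 + x) ^ (-(q - 1))) x := by
    intro x hx
    have hx0 : (0:ℝ) < 1 + x := by have := mem_Ioi.mp hx; linarith
    have h1 : HasDerivAt (fun r : ℝ => (1 + r)) 1 x := by
      simpa using (hasDerivAt_id x).const_add 1
    have h2 := (h1.rpow_const (p := 2 - q) (Or.inl hx0.ne'))
    have h3 := (h2.neg).div_const (q - 2)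
    have hne : q - 2 ≠ 0 := by linarith
    refine h3.congr_deriv ?_; symm
    rw [show (2 : ℝ) - q - 1 = -(q-1) by ring]
    field_simp
    ring
  have htend : Tendsto (fun r : ℝ => -(1 + r) ^ (2 - q) / (q - 2)) atTop (𝓝 0) := by
    have h1 : Tendsto (fun r : ℝ => 1 + r) atTop atTop :=
      tendsto_atTop_add_const_left _ 1 tendsto_id
    have h2 := (tendsto_rpow_neg_atTop (y := q - 2) (by linarith)).comp h1
    have h3 : Tendsto (fun r : ℝ => (1 + r) ^ (2 - q)) atTop (𝓝 0) := by
      simpa only [Function.comp_def, show -(q-2) = 2-q from by ring] using h2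
    simpa using (h3.neg).div_const (q - 2)
  have hcont : ContinuousWithinAt (fun r : ℝ => -(1 + r) ^ (2 - q) / (q - 2)) (Ici 0) 0 := by
    apply ContinuousAt.continuousWithinAt
    have : ContinuousAt (fun r : ℝ => (1 + r) ^ (2 - q)) 0 := by
      apply ContinuousAt.rpow_const
      · exact (continuous_const.add continuous_id).continuousAt
      · left; norm_num
    exact (this.neg).div_const _
  have := integral_Ioi_of_hasDerivAt_of_tendsto hcont hderiv (aux_integrableOn hq) htend
  rw [this]
  norm_num
  ring

lemma aux_radial {q : ℝ} (hq : 2 < q) :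
    ∫ s : EuclideanSpace ℝ (Fin 2), (1 + ‖s‖) ^ (-q) ≤ 2 * π / (q - 2) := by
  rw [MeasureTheory.integral_fun_norm_addHaar (volume : Measure (EuclideanSpace ℝ (Fin 2)))
    (fun r : ℝ => (1 + r) ^ (-q))]
  have hdim : finrank ℝ (EuclideanSpace ℝ (Fin 2)) = 2 := finrank_euclideanSpace_fin
  rw [hdim]
  have hball : (volume (ball (0 : EuclideanSpace ℝ (Fin 2)) 1)).toReal = π := by
    rw [EuclideanSpace.volume_ball]
    simp only [Real.sq_sqrt Real.pi_nonneg, Fintype.card_fin]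
    rw [show ((2:ℕ):ℝ)/2 + 1 = 2 by norm_num]
    simp [Real.Gamma_two, Real.sq_sqrt Real.pi_nonneg, ENNReal.toReal_ofReal Real.pi_nonneg]
  rw [measureReal_def, hball]
  have hmono : ∫ y in Ioi (0:ℝ), y ^ (2 - 1) • (1 + y) ^ (-q)
      ≤ ∫ y in Ioi (0:ℝ), (1 + y) ^ (-(q - 1)) := by
    refine setIntegral_mono_on ?_ (aux_integrableOn hq) measurableSet_Ioi ?_
    · refine (aux_integrableOn hq).mono' ?_ ?_
      · apply Measurable.aestronglyMeasurable
        fun_prop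
      · filter_upwards [self_mem_ae_restrict measurableSet_Ioi] with y hy
        have hy0 : (0:ℝ) < y := hy
        rw [Real.norm_eq_abs, abs_of_nonneg (by positivity)]
        calc y ^ (2-1) • (1 + y) ^ (-q) = y * (1 + y) ^ (-q) := by simp
          _ ≤ (1 + y) * (1 + y) ^ (-q) := by
              have : (0:ℝ) ≤ (1 + y) ^ (-q) := by positivity
              nlinarith
          _ = (1 + y) ^ (-(q-1)) := by
              rw [show -(q-1) = 1 + (-q) by ring, Real.rpow_add (by linarith), Real.rpow_one]
    · intro y hy
      have hy0 : (0:ℝ) < y := hy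
      calc y ^ (2-1) • (1 + y) ^ (-q) = y * (1 + y) ^ (-q) := by simp
        _ ≤ (1 + y) * (1 + y) ^ (-q) := by
            have : (0:ℝ) ≤ (1 + y) ^ (-q) := by positivity
            nlinarith
        _ = (1 + y) ^ (-(q-1)) := by
            rw [show -(q-1) = 1 + (-q) by ring, Real.rpow_add (by linarith), Real.rpow_one]
  have := aux_integral_val hq
  rw [this] at hmono
  have hq2 : (0:ℝ) < q - 2 := by linarith
  calc (2 • π • ∫ y in Ioi (0:ℝ), y ^ (2 - 1) • (1 + y) ^ (-q))
      = 2 * (π * ∫ y in Ioi (0:ℝ), y ^ (2 - 1) • (1 + y) ^ (-q)) := by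
        simp [smul_eq_mul]
    _ ≤ 2 * (π * (1 / (q - 2))) := by
        have := Real.pi_pos
        gcongr
    _ = 2 * π / (q - 2) := by field_simp

lemma aux_key {q A a b c : ℝ} (hq : 0 ≤ q) (hA : 0 ≤ A) (ha : 0 ≤ a) (hb : 0 ≤ b)
    (hc : 0 ≤ c) (hmax : c ≤ a ∨ c ≤ b) :
    A * (1 + a) ^ (-q) * (A * (1 + b) ^ (-q))
      ≤ (1 + c) ^ (-q) * (A ^ 2 * ((1 + a) ^ (-q) + (1 + b) ^ (-q))) := by
  have h1a : (0:ℝ) < 1 + a := by linarith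
  have h1b : (0:ℝ) < 1 + b := by linarith
  have h1c : (0:ℝ) < 1 + c := by linarith
  have hqa : (0:ℝ) ≤ (1 + a) ^ (-q) := by positivity
  have hqb : (0:ℝ) ≤ (1 + b) ^ (-q) := by positivity
  have hqc : (0:ℝ) ≤ (1 + c) ^ (-q) := by positivity
  rcases hmax with hm | hm
  · have hle : (1 + a) ^ (-q) ≤ (1 + c) ^ (-q) :=
      Real.rpow_le_rpow_of_nonpos h1c (by linarith) (by linarith)
    calc A * (1 + a) ^ (-q) * (A * (1 + b) ^ (-q))
        = A ^ 2 * ((1 + a) ^ (-q) * (1 + b) ^ (-q)) := by ring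
      _ ≤ A ^ 2 * ((1 + c) ^ (-q) * (1 + b) ^ (-q)) := by
          exact mul_le_mul_of_nonneg_left (mul_le_mul_of_nonneg_right hle hqb) (by positivity)
      _ ≤ (1 + c) ^ (-q) * (A ^ 2 * ((1 + a) ^ (-q) + (1 + b) ^ (-q))) := by
          nlinarith [mul_nonneg (mul_nonneg (sq_nonneg A) hqc) hqa]
  · have hle : (1 + b) ^ (-q) ≤ (1 + c) ^ (-q) :=
      Real.rpow_le_rpow_of_nonpos h1c (by linarith) (by linarith)
    calc A * (1 + a) ^ (-q) * (A * (1 + b) ^ (-q))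
        = A ^ 2 * ((1 + b) ^ (-q) * (1 + a) ^ (-q)) := by ring
      _ ≤ A ^ 2 * ((1 + c) ^ (-q) * (1 + a) ^ (-q)) := by
          exact mul_le_mul_of_nonneg_left (mul_le_mul_of_nonneg_right hle hqa) (by positivity)
      _ ≤ (1 + c) ^ (-q) * (A ^ 2 * ((1 + a) ^ (-q) + (1 + b) ^ (-q))) := by
          nlinarith [mul_nonneg (mul_nonneg (sq_nonneg A) hqc) hqb]

/-- Let `α > 4`, `A ≥ 0`, and let `φ : ℝ² → ℂ` be measurable with
`|φ(t)| ≤ A(1+|t|)^{−α/2}` for almost every `t ∈ ℝ²`.  Then for every `h ∈ ℝ²`,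
`|∫_{ℝ²} φ(−h−s) conj(φ(h−s)) ds| ≤ (8πA²/(α−4)) (1+|h|)^{−α/2}`. -/
theorem stmt14 (α : ℝ) (hα : 4 < α) (A : ℝ) (hA : 0 ≤ A)
    (φ : EuclideanSpace ℝ (Fin 2) → ℂ) (hφ : Measurable φ)
    (hbound : ∀ᵐ t : EuclideanSpace ℝ (Fin 2), ‖φ t‖ ≤ A * (1 + ‖t‖) ^ (-(α / 2)))
    (h : EuclideanSpace ℝ (Fin 2)) :
    ‖∫ s : EuclideanSpace ℝ (Fin 2), φ (-h - s) * (starRingEnd ℂ) (φ (h - s))‖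
      ≤ 8 * π * A ^ 2 / (α - 4) * (1 + ‖h‖) ^ (-(α / 2)) := by
  set q := α / 2 with hqdef
  have hq2 : (2:ℝ) < q := by rw [hqdef]; linarith
  have hq0 : (0:ℝ) ≤ q := by linarith
  have hdim : ((finrank ℝ (EuclideanSpace ℝ (Fin 2))) : ℝ) < q := by
    rw [finrank_euclideanSpace_fin]; exact_mod_cast hq2
  have hint : Integrable (fun s : EuclideanSpace ℝ (Fin 2) => (1 + ‖s‖) ^ (-q)) :=
    integrable_one_add_norm hdim
  have hint1 : Integrable (fun s : EuclideanSpace ℝ (Fin 2) => (1 + ‖-h - s‖) ^ (-q)) := by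
    simpa [sub_eq_add_neg] using hint.comp_sub_left (-h)
  have hint2 : Integrable (fun s : EuclideanSpace ℝ (Fin 2) => (1 + ‖h - s‖) ^ (-q)) :=
    hint.comp_sub_left h
  set g : EuclideanSpace ℝ (Fin 2) → ℝ :=
    fun s => (1 + ‖h‖) ^ (-q) * (A ^ 2 * ((1 + ‖-h - s‖) ^ (-q) + (1 + ‖h - s‖) ^ (-q)))
    with hgdef
  have hg : Integrable g := (((hint1.add hint2).const_mul (A ^ 2)).const_mul _)
  have hae1 : ∀ᵐ s : EuclideanSpace ℝ (Fin 2),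
      ‖φ (-h - s)‖ ≤ A * (1 + ‖-h - s‖) ^ (-q) :=
    (Measure.measurePreserving_sub_left volume (-h)).quasiMeasurePreserving.ae hbound
  have hae2 : ∀ᵐ s : EuclideanSpace ℝ (Fin 2),
      ‖φ (h - s)‖ ≤ A * (1 + ‖h - s‖) ^ (-q) :=
    (Measure.measurePreserving_sub_left volume h).quasiMeasurePreserving.ae hbound
  have hptwise : ∀ᵐ s : EuclideanSpace ℝ (Fin 2),
      ‖φ (-h - s) * (starRingEnd ℂ) (φ (h - s))‖ ≤ g s := by
    filter_upwards [hae1, hae2] with s h1 h2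
    rw [norm_mul, RCLike.norm_conj]
    have hmax : ‖h‖ ≤ ‖-h - s‖ ∨ ‖h‖ ≤ ‖h - s‖ := by
      by_contra hcon
      push_neg at hcon
      have h2h : (2:ℝ) * ‖h‖ ≤ ‖-h - s‖ + ‖h - s‖ := by
        have e : (-h - s) - (h - s) = -((2:ℝ) • h) := by
          rw [two_smul]; abel
        calc (2:ℝ) * ‖h‖ = ‖(-h - s) - (h - s)‖ := by
              rw [e, norm_neg, norm_smul]; simp
          _ ≤ ‖-h - s‖ + ‖h - s‖ := norm_sub_le _ _
      linarith [hcon.1, hcon.2]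
    calc ‖φ (-h - s)‖ * ‖φ (h - s)‖
        ≤ A * (1 + ‖-h - s‖) ^ (-q) * (A * (1 + ‖h - s‖) ^ (-q)) :=
          mul_le_mul h1 h2 (norm_nonneg _) (by positivity)
      _ ≤ g s := aux_key hq0 hA (norm_nonneg _) (norm_nonneg _) (norm_nonneg _) hmax
  have hnorm := norm_integral_le_of_norm_le hg hptwise
  have hval : ∫ s : EuclideanSpace ℝ (Fin 2), g s
      = (1 + ‖h‖) ^ (-q) * (A ^ 2 *
        (2 * ∫ s : EuclideanSpace ℝ (Fin 2), (1 + ‖s‖) ^ (-q))) := by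
    rw [hgdef]
    rw [integral_const_mul, integral_const_mul, integral_add hint1 hint2]
    have e1 : ∫ s : EuclideanSpace ℝ (Fin 2), (1 + ‖-h - s‖) ^ (-q)
        = ∫ s : EuclideanSpace ℝ (Fin 2), (1 + ‖s‖) ^ (-q) :=
      integral_sub_left_eq_self (fun s => (1 + ‖s‖) ^ (-q)) volume (-h)
    have e2 : ∫ s : EuclideanSpace ℝ (Fin 2), (1 + ‖h - s‖) ^ (-q)
        = ∫ s : EuclideanSpace ℝ (Fin 2), (1 + ‖s‖) ^ (-q) :=
      integral_sub_left_eq_self (fun s => (1 + ‖s‖) ^ (-q)) volume h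
    rw [e1, e2]; ring
  rw [hval] at hnorm
  refine hnorm.trans ?_
  have hrad := aux_radial hq2
  have hα4 : (0:ℝ) < α - 4 := by linarith
  calc (1 + ‖h‖) ^ (-q) * (A ^ 2 * (2 * ∫ s : EuclideanSpace ℝ (Fin 2), (1 + ‖s‖) ^ (-q)))
      ≤ (1 + ‖h‖) ^ (-q) * (A ^ 2 * (2 * (2 * π / (q - 2)))) := by
        have h1 : (0:ℝ) ≤ (1 + ‖h‖) ^ (-q) := by positivity
        gcongr
    _ = 8 * π * A ^ 2 / (α - 4) * (1 + ‖h‖) ^ (-q) := by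
        rw [hqdef, show α / 2 - 2 = (α - 4) / 2 by ring]
        rw [div_div_eq_mul_div]
        ring
end
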